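/- Let B and S be complex symmetric n×n matrices with S² = B, and suppose Re B is positive definite. Then Re S is an invertible matrix. (Indeed, writing S = S₀ + iS₁ with S₀, S₁ real, one has S₀² = Re B + S₁², which is positive definite.) -/
import Mathlib

open scoped Matrix

/-- The entrywise real part of a complex matrix. -/
def matRe {n : ℕ} (B : Matrix (Fin n) (Fin n) ℂ) : Matrix (Fin n) (Fin n) ℝ :=
  B.map Complex.re

def matIm {n : ℕ} (B : Matrix (Fin n) (Fin n) ℂ) : Matrix (Fin n) (Fin n) ℝ :=
  B.map Complex.im

lemma matRe_mul {n : ℕ} (A B : Matrix (Fin n) (Fin n) ℂ) :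
    matRe (A * B) = matRe A * matRe B - matIm A * matIm B := by
  ext i j
  simp [matRe, matIm, Matrix.mul_apply, Complex.re_sum, Complex.mul_re,
    Finset.sum_sub_distrib]

/-- Let `B` and `S` be complex symmetric `n×n` matrices with `S² = B`, and
suppose `Re B` is positive definite.  Then `Re S` is an invertible matrix. -/
theorem stmt_10 {n : ℕ} (B S : Matrix (Fin n) (Fin n) ℂ)
    (hB : Bᵀ = B) (hS : Sᵀ = S) (hSB : S * S = B) (hRe : (matRe B).PosDef) :
    IsUnit (matRe S) := by
  have hImT : (matIm S)ᵀ = matIm S := by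
    ext i j
    simpa [matIm] using congrArg Complex.im (congrFun (congrFun hS i) j)
  have hkey : matRe S * matRe S = matRe B + (matIm S)ᴴ * matIm S := by
    have := matRe_mul S S
    rw [hSB] at this
    have hconj : (matIm S)ᴴ = matIm S := by
      ext i j
      simp only [Matrix.conjTranspose_apply, matIm, Matrix.map_apply, star_trivial]
      exact congrArg Complex.im (congrFun (congrFun hS i) j)
    rw [hconj, this, sub_add_cancel]
  have hPD : (matRe S * matRe S).PosDef := by
    rw [hkey]
    exact hRe.add_posSemidef (Matrix.posSemidef_conjTranspose_mul_self _)
  have := hPD.isUnit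
  rw [Matrix.isUnit_iff_isUnit_det, Matrix.det_mul] at this
  exact (Matrix.isUnit_iff_isUnit_det _).2 (isUnit_of_mul_isUnit_left this)
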